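/- Every simple graph satisfying property P contains no induced subgraph isomorphic to an odd cycle of length greater than 3. -/
import Mathlib


/-- Property `P` of the paper: for any two disjoint edges `(v1,w1)` and
`(v2,w2)` of `G`, if `(v2,v1)` is an edge then `(w2,v1)` or `(w2,w1)` is an
edge of `G`. -/
def SimpleGraph.PropertyP {V : Type*} (G : SimpleGraph V) : Prop :=
  ∀ ⦃v1 w1 v2 w2 : V⦄, G.Adj v1 w1 → G.Adj v2 w2 →
    v1 ≠ v2 → v1 ≠ w2 → w1 ≠ v2 → w1 ≠ w2 →
    G.Adj v2 v1 → (G.Adj w2 v1 ∨ G.Adj w2 w1)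

/-- Every simple graph satisfying property `P` has no induced subgraph
isomorphic to an odd cycle of length greater than `3`. -/
theorem no_induced_long_odd_cycle_of_propertyP {V : Type*} (G : SimpleGraph V)
    (hP : G.PropertyP) (n : ℕ) (hn : 3 < n) (hodd : Odd n) :
    IsEmpty (SimpleGraph.cycleGraph n ↪g G) := by
  constructor
  intro f
  have hn5 : 5 ≤ n := by rcases hodd with ⟨k, rfl⟩; omega
  have cadj : ∀ (a b : ℕ) (ha : a < n) (hb : b < n),
      (SimpleGraph.cycleGraph n).Adj ⟨a, ha⟩ ⟨b, hb⟩ ↔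
        ((a + (n - b)) % n = 1 ∨ (b + (n - a)) % n = 1) := by
    intro a b ha hb
    rw [SimpleGraph.cycleGraph_adj']
    simp [Fin.sub_def, Nat.add_comm]
  have hsucc : ∀ (a : ℕ) (h : a + 1 < n), (a + 1 + (n - a)) % n = 1 := by
    intro a h
    have e : a + 1 + (n - a) = n + 1 := by omega
    rw [e, Nat.add_mod_left, Nat.mod_eq_of_lt (by omega)]
  set i2 : Fin n := ⟨2, by omega⟩
  set i3 : Fin n := ⟨3, by omega⟩
  set i1 : Fin n := ⟨1, by omega⟩
  set i0 : Fin n := ⟨0, by omega⟩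
  have h23 : G.Adj (f i2) (f i3) := f.map_adj_iff.mpr ((cadj 2 3 (by omega) (by omega)).mpr
    (Or.inr (hsucc 2 (by omega))))
  have h10 : G.Adj (f i1) (f i0) := f.map_adj_iff.mpr ((cadj 1 0 (by omega) (by omega)).mpr
    (Or.inl (hsucc 0 (by omega))))
  have h12 : G.Adj (f i1) (f i2) := f.map_adj_iff.mpr ((cadj 1 2 (by omega) (by omega)).mpr
    (Or.inr (hsucc 1 (by omega))))
  have hne : ∀ (a b : ℕ) (ha : a < n) (hb : b < n), a ≠ b → f ⟨a, ha⟩ ≠ f ⟨b, hb⟩ := by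
    intro a b ha hb hab h
    exact hab (by simpa [Fin.ext_iff] using f.injective h)
  have key := hP h23 h10 (hne 2 1 (by omega) (by omega) (by omega))
    (hne 2 0 (by omega) (by omega) (by omega)) (hne 3 1 (by omega) (by omega) (by omega))
    (hne 3 0 (by omega) (by omega) (by omega)) h12
  have hmod : ∀ b : ℕ, b < n → 2 ≤ b → b + 2 ≤ n → ¬ ((0 + (n - b)) % n = 1 ∨ (b + (n - 0)) % n = 1) := by
    intro b hb hb2 hb3
    have e1 : (0 + (n - b)) % n = n - b := by
      rw [Nat.zero_add, Nat.mod_eq_of_lt (by omega)]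
    have e2 : (b + (n - 0)) % n = b := by
      rw [Nat.sub_zero, Nat.add_mod_right, Nat.mod_eq_of_lt (by omega)]
    rw [e1, e2]
    omega
  rcases key with h | h
  · exact hmod 2 (by omega) (by omega) (by omega) ((cadj 0 2 (by omega) (by omega)).mp (f.map_adj_iff.mp h))
  · exact hmod 3 (by omega) (by omega) (by omega) ((cadj 0 3 (by omega) (by omega)).mp (f.map_adj_iff.mp h))
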